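/- Let K be a positive integer, let R be a real symmetric positive semidefinite K×K matrix, and let R_n be a real symmetric positive definite K×K matrix with eigendecomposition R_n = Φ_n Λ_n Φ_nᵀ, where Φ_n is orthogonal and Λ_n is diagonal with strictly positive diagonal entries. Set W_n = Φ_n Λ_n^{-1/2} and let λ_max be the largest eigenvalue of R_adj = W_nᵀ R W_n. Then for every real K×K matrix X, ‖Xᵀ R X‖₂ ≤ λ_max · ‖Xᵀ R_n X‖₂. -/

import Mathlib

open Matrix

/-- The largest eigenvalue of a real K×K matrix, as the supremum of its real spectrum. -/
noncomputable def maxEig {K : ℕ} (A : Matrix (Fin K) (Fin K) ℝ) : ℝ :=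
  sSup (spectrum ℝ A)

/-- The spectral (L² operator) norm: ‖X‖₂ = √(λ_max(Xᵀ X)). -/
noncomputable def matSpectralNorm {K : ℕ} (X : Matrix (Fin K) (Fin K) ℝ) : ℝ :=
  Real.sqrt (maxEig (Xᵀ * X))

/-- For a diagonal matrix with strictly positive diagonal entries `d`,
`invSqrtDiag d` is the diagonal matrix Λ^{-1/2} of inverse square roots. -/
noncomputable def invSqrtDiag {K : ℕ} (d : Fin K → ℝ) : Matrix (Fin K) (Fin K) ℝ :=
  Matrix.diagonal fun i => (Real.sqrt (d i))⁻¹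

section Aux

variable {K : ℕ}

lemma dot_conj (W M : Matrix (Fin K) (Fin K) ℝ) (y : Fin K → ℝ) :
    (W *ᵥ y) ⬝ᵥ (M *ᵥ (W *ᵥ y)) = y ⬝ᵥ ((Wᵀ * M * W) *ᵥ y) := by
  rw [mul_assoc, dotProduct_mulVec, dotProduct_mulVec, dotProduct_mulVec,
    ← vecMul_vecMul, vecMul_transpose, vecMul_vecMul]

lemma maxEig_isGreatest (hK : 0 < K) {A : Matrix (Fin K) (Fin K) ℝ} (hA : A.IsHermitian) :
    IsGreatest (Set.range hA.eigenvalues) (maxEig A) := by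
  haveI : Nonempty (Fin K) := ⟨⟨0, hK⟩⟩
  have hne : (Set.range hA.eigenvalues).Nonempty := Set.range_nonempty _
  have hfin : (Set.range hA.eigenvalues).Finite := Set.finite_range _
  have h1 : maxEig A = sSup (Set.range hA.eigenvalues) := by
    rw [maxEig, hA.spectrum_real_eq_range_eigenvalues]
  constructor
  · rw [h1]; exact hne.csSup_mem hfin
  · rw [h1]; exact fun x hx => le_csSup hfin.bddAbove hx

lemma star_unitary_eq {A : Matrix (Fin K) (Fin K) ℝ} (hA : A.IsHermitian) :
    star (hA.eigenvectorUnitary : Matrix (Fin K) (Fin K) ℝ)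
      = (hA.eigenvectorUnitary : Matrix (Fin K) (Fin K) ℝ)ᵀ := by
  rw [Matrix.star_eq_conjTranspose, conjTranspose_eq_transpose_of_trivial]

lemma rayleigh_le (hK : 0 < K) {A : Matrix (Fin K) (Fin K) ℝ} (hA : A.IsHermitian)
    (x : Fin K → ℝ) : x ⬝ᵥ (A *ᵥ x) ≤ maxEig A * (x ⬝ᵥ x) := by
  obtain ⟨_, hub⟩ := maxEig_isGreatest hK hA
  set U : Matrix (Fin K) (Fin K) ℝ := (hA.eigenvectorUnitary : Matrix (Fin K) (Fin K) ℝ) with hU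
  have hUU : U * star U = 1 := (Matrix.mem_unitaryGroup_iff).mp hA.eigenvectorUnitary.2
  set y : Fin K → ℝ := star U *ᵥ x with hy
  have hxy : U *ᵥ y = x := by
    rw [hy, mulVec_mulVec, hUU, one_mulVec]
  have hdiag : Uᵀ * A * U = diagonal hA.eigenvalues := by
    rw [← star_unitary_eq hA]
    have h := hA.conjStarAlgAut_star_eigenvectorUnitary
    simp only [Unitary.conjStarAlgAut_star_apply, Unitary.coe_star] at h
    rw [hU, h]
    congr 1
  have h1 : x ⬝ᵥ (A *ᵥ x) = y ⬝ᵥ (diagonal hA.eigenvalues *ᵥ y) := by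
    rw [← hxy, dot_conj, hdiag]
  have h2 : x ⬝ᵥ x = y ⬝ᵥ y := by
    have h := dot_conj Uᵀ 1 x
    rw [one_mulVec] at h
    rw [hy, star_unitary_eq hA, h, transpose_transpose, Matrix.mul_one,
      ← star_unitary_eq hA, hUU, one_mulVec]
  rw [h1, h2]
  have h3 : y ⬝ᵥ (diagonal hA.eigenvalues *ᵥ y) = ∑ i, hA.eigenvalues i * (y i * y i) := by
    simp only [dotProduct, mulVec_diagonal]
    exact Finset.sum_congr rfl fun i _ => by ring
  rw [h3, dotProduct, Finset.mul_sum]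
  refine Finset.sum_le_sum fun i _ => ?_
  have h4 : hA.eigenvalues i ≤ maxEig A := hub ⟨i, rfl⟩
  nlinarith [mul_self_nonneg (y i)]

lemma maxEig_achieved (hK : 0 < K) {A : Matrix (Fin K) (Fin K) ℝ} (hA : A.IsHermitian) :
    ∃ v : Fin K → ℝ, v ⬝ᵥ v = 1 ∧ v ⬝ᵥ (A *ᵥ v) = maxEig A := by
  obtain ⟨⟨i, hi⟩, _⟩ := maxEig_isGreatest hK hA
  have h2 : (inner ℝ (hA.eigenvectorBasis i) (hA.eigenvectorBasis i) : ℝ) = 1 := by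
    rw [real_inner_self_eq_norm_mul_norm, hA.eigenvectorBasis.orthonormal.1 i, one_mul]
  have h3 : (⇑(hA.eigenvectorBasis i) : Fin K → ℝ) ⬝ᵥ ⇑(hA.eigenvectorBasis i) = 1 := by
    simpa only [PiLp.inner_apply, RCLike.inner_apply, conj_trivial, dotProduct] using h2
  refine ⟨(WithLp.equiv 2 _) (hA.eigenvectorBasis i), h3, ?_⟩
  rw [show ((WithLp.equiv 2 _) (hA.eigenvectorBasis i) : Fin K → ℝ) = ⇑(hA.eigenvectorBasis i) from rfl,
    hA.mulVec_eigenvectorBasis i, dotProduct_smul, smul_eq_mul, h3, mul_one, hi]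

end Aux

section Aux2

variable {K : ℕ}

lemma maxEig_le_of_quad (hK : 0 < K) {B C : Matrix (Fin K) (Fin K) ℝ}
    (hB : B.IsHermitian) (hC : C.IsHermitian) (c : ℝ) (hc : 0 ≤ c)
    (h : ∀ y, y ⬝ᵥ (B *ᵥ y) ≤ c * (y ⬝ᵥ (C *ᵥ y))) :
    maxEig B ≤ c * maxEig C := by
  obtain ⟨v, hv1, hv2⟩ := maxEig_achieved hK hB
  calc maxEig B = v ⬝ᵥ (B *ᵥ v) := hv2.symm
    _ ≤ c * (v ⬝ᵥ (C *ᵥ v)) := h v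
    _ ≤ c * (maxEig C * (v ⬝ᵥ v)) := mul_le_mul_of_nonneg_left (rayleigh_le hK hC v) hc
    _ = c * maxEig C := by rw [hv1, mul_one]

lemma spectralNorm_psd (hK : 0 < K) {M : Matrix (Fin K) (Fin K) ℝ} (hM : M.PosSemidef) :
    matSpectralNorm M = maxEig M := by
  have hH := hM.isHermitian
  have hMT : Mᵀ = M := by rw [← conjTranspose_eq_transpose_of_trivial, hH.eq]
  have hsUU : star (hH.eigenvectorUnitary : Matrix (Fin K) (Fin K) ℝ)
      * (hH.eigenvectorUnitary : Matrix (Fin K) (Fin K) ℝ) = 1 :=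
    Matrix.mem_unitaryGroup_iff'.mp hH.eigenvectorUnitary.2
  have hMM : M * M = (hH.eigenvectorUnitary : Matrix (Fin K) (Fin K) ℝ)
      * diagonal (fun i => hH.eigenvalues i * hH.eigenvalues i)
      * star (hH.eigenvectorUnitary : Matrix (Fin K) (Fin K) ℝ) := by
    conv_lhs => rw [hH.spectral_theorem, Unitary.conjStarAlgAut_apply]
    have : (diagonal (RCLike.ofReal ∘ hH.eigenvalues) : Matrix (Fin K) (Fin K) ℝ)
        = diagonal hH.eigenvalues := by
      congr 1
    rw [this]
    calc ((hH.eigenvectorUnitary : Matrix (Fin K) (Fin K) ℝ) * diagonal hH.eigenvalues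
          * star (hH.eigenvectorUnitary : Matrix (Fin K) (Fin K) ℝ))
          * ((hH.eigenvectorUnitary : Matrix (Fin K) (Fin K) ℝ) * diagonal hH.eigenvalues
          * star (hH.eigenvectorUnitary : Matrix (Fin K) (Fin K) ℝ))
        = (hH.eigenvectorUnitary : Matrix (Fin K) (Fin K) ℝ) * (diagonal hH.eigenvalues
          * ((star (hH.eigenvectorUnitary : Matrix (Fin K) (Fin K) ℝ)
          * (hH.eigenvectorUnitary : Matrix (Fin K) (Fin K) ℝ)) * (diagonal hH.eigenvalues
          * star (hH.eigenvectorUnitary : Matrix (Fin K) (Fin K) ℝ)))) := by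
          simp only [Matrix.mul_assoc]
      _ = _ := by
          rw [hsUU, Matrix.one_mul,
            show (hH.eigenvectorUnitary : Matrix (Fin K) (Fin K) ℝ)
              * (diagonal hH.eigenvalues * (diagonal hH.eigenvalues
              * star (hH.eigenvectorUnitary : Matrix (Fin K) (Fin K) ℝ)))
              = (hH.eigenvectorUnitary : Matrix (Fin K) (Fin K) ℝ)
              * (diagonal hH.eigenvalues * diagonal hH.eigenvalues)
              * star (hH.eigenvectorUnitary : Matrix (Fin K) (Fin K) ℝ) from by
                simp only [Matrix.mul_assoc],
            diagonal_mul_diagonal]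
  have hspec2 : spectrum ℝ (M * M)
      = Set.range (fun i => hH.eigenvalues i * hH.eigenvalues i) := by
    rw [hMM, Unitary.spectrum_star_right_conjugate, spectrum_diagonal]
  obtain ⟨⟨i0, hi0⟩, hub⟩ := maxEig_isGreatest hK hH
  have m0 : 0 ≤ maxEig M := hi0 ▸ hM.eigenvalues_nonneg i0
  have hgr : IsGreatest (Set.range fun i => hH.eigenvalues i * hH.eigenvalues i)
      (maxEig M * maxEig M) := by
    constructor
    · exact ⟨i0, by dsimp; rw [hi0]⟩
    · rintro x ⟨i, rfl⟩
      have h1 : hH.eigenvalues i ≤ maxEig M := hub ⟨i, rfl⟩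
      have h2 : 0 ≤ hH.eigenvalues i := hM.eigenvalues_nonneg i
      exact mul_le_mul h1 h1 h2 m0
  have : maxEig (Mᵀ * M) = maxEig M * maxEig M := by
    rw [hMT, maxEig, hspec2, hgr.csSup_eq]
  rw [matSpectralNorm, this, Real.sqrt_mul_self m0]

end Aux2


/-- For every real K×K matrix `X`,
`‖Xᵀ R X‖₂ ≤ λ_max(R_adj) · ‖Xᵀ Rₙ X‖₂`. -/
theorem snr_functional_upper_bound (K : ℕ) (hK : 0 < K)
    (R Rn Φ : Matrix (Fin K) (Fin K) ℝ) (d : Fin K → ℝ)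
    (hR : R.PosSemidef) (hRn : Rn.PosDef)
    (hΦ : Φᵀ * Φ = 1) (hd : ∀ i, 0 < d i)
    (hdecomp : Rn = Φ * Matrix.diagonal d * Φᵀ)
    (Wn : Matrix (Fin K) (Fin K) ℝ) (hWn : Wn = Φ * invSqrtDiag d)
    (lmax : ℝ) (hlmax : lmax = maxEig (Wnᵀ * R * Wn)) :
    ∀ X : Matrix (Fin K) (Fin K) ℝ,
      matSpectralNorm (Xᵀ * R * X) ≤ lmax * matSpectralNorm (Xᵀ * Rn * X) := by
  have hΦ' : Φ * Φᵀ = 1 := mul_eq_one_comm.mp hΦ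
  have hds : ∀ i, Real.sqrt (d i) * Real.sqrt (d i) = d i :=
    fun i => Real.mul_self_sqrt (le_of_lt (hd i))
  have hsd : ∀ i, Real.sqrt (d i) ≠ 0 :=
    fun i => ne_of_gt (Real.sqrt_pos.mpr (hd i))
  have hWnT : Wnᵀ = invSqrtDiag d * Φᵀ := by
    rw [hWn, transpose_mul, invSqrtDiag, diagonal_transpose]
  -- Wnᵀ Rn Wn = 1
  have hRnW : Wnᵀ * Rn * Wn = 1 := by
    rw [hWnT, hWn, hdecomp, invSqrtDiag]
    have hassoc : (diagonal (fun i => (Real.sqrt (d i))⁻¹) * Φᵀ)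
        * (Φ * Matrix.diagonal d * Φᵀ) * (Φ * diagonal (fun i => (Real.sqrt (d i))⁻¹))
        = diagonal (fun i => (Real.sqrt (d i))⁻¹) * ((Φᵀ * Φ) * (Matrix.diagonal d
          * ((Φᵀ * Φ) * diagonal (fun i => (Real.sqrt (d i))⁻¹)))) := by
      simp only [Matrix.mul_assoc]
    rw [hassoc, hΦ, Matrix.one_mul, Matrix.one_mul, diagonal_mul_diagonal,
      diagonal_mul_diagonal]
    have hfun : (fun i => (Real.sqrt (d i))⁻¹ * (d i * (Real.sqrt (d i))⁻¹))
        = fun _ : Fin K => (1:ℝ) := by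
      funext i
      rw [mul_comm (d i), ← mul_assoc, ← mul_inv, hds i,
        inv_mul_cancel₀ (ne_of_gt (hd i))]
    rw [hfun, diagonal_one]
  -- Wn has right inverse Vn
  have hWV : Wn * (diagonal (fun i => Real.sqrt (d i)) * Φᵀ) = 1 := by
    rw [hWn, invSqrtDiag]
    have hassoc : Φ * diagonal (fun i => (Real.sqrt (d i))⁻¹)
        * (diagonal (fun i => Real.sqrt (d i)) * Φᵀ)
        = Φ * ((diagonal (fun i => (Real.sqrt (d i))⁻¹)
          * diagonal (fun i => Real.sqrt (d i))) * Φᵀ) := by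
      simp only [Matrix.mul_assoc]
    rw [hassoc, diagonal_mul_diagonal]
    have hfun : (fun i => (Real.sqrt (d i))⁻¹ * Real.sqrt (d i))
        = fun _ : Fin K => (1:ℝ) := by
      funext i
      exact inv_mul_cancel₀ (hsd i)
    rw [hfun, diagonal_one, Matrix.one_mul, hΦ']
  have hA' : (Wnᵀ * R * Wn).PosSemidef := by
    have := hR.conjTranspose_mul_mul_same Wn
    rwa [conjTranspose_eq_transpose_of_trivial] at this
  have hl0 : 0 ≤ lmax := by
    obtain ⟨⟨i, hi⟩, _⟩ := maxEig_isGreatest hK hA'.isHermitian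
    rw [hlmax, ← hi]
    exact hA'.eigenvalues_nonneg i
  have key : ∀ x : Fin K → ℝ, x ⬝ᵥ (R *ᵥ x) ≤ lmax * (x ⬝ᵥ (Rn *ᵥ x)) := by
    intro x
    set y : Fin K → ℝ := (diagonal (fun i => Real.sqrt (d i)) * Φᵀ) *ᵥ x with hy
    have hx : Wn *ᵥ y = x := by rw [hy, mulVec_mulVec, hWV, one_mulVec]
    have e1 : x ⬝ᵥ (R *ᵥ x) = y ⬝ᵥ ((Wnᵀ * R * Wn) *ᵥ y) := by rw [← hx, dot_conj]
    have e2 : x ⬝ᵥ (Rn *ᵥ x) = y ⬝ᵥ y := by rw [← hx, dot_conj, hRnW, one_mulVec]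
    rw [e1, e2, hlmax]
    exact rayleigh_le hK hA'.isHermitian y
  intro X
  have hB : (Xᵀ * R * X).PosSemidef := by
    have := hR.conjTranspose_mul_mul_same X
    rwa [conjTranspose_eq_transpose_of_trivial] at this
  have hC : (Xᵀ * Rn * X).PosSemidef := by
    have := hRn.posSemidef.conjTranspose_mul_mul_same X
    rwa [conjTranspose_eq_transpose_of_trivial] at this
  have hq : ∀ y : Fin K → ℝ,
      y ⬝ᵥ ((Xᵀ * R * X) *ᵥ y) ≤ lmax * (y ⬝ᵥ ((Xᵀ * Rn * X) *ᵥ y)) := by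
    intro y
    rw [← dot_conj, ← dot_conj]
    exact key (X *ᵥ y)
  have hle := maxEig_le_of_quad hK hB.isHermitian hC.isHermitian lmax hl0 hq
  rw [spectralNorm_psd hK hB, spectralNorm_psd hK hC]
  exact hle
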